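/- Let E = (E^0, E^1, s_E, r_E) and F = (F^0, F^1, s_F, r_F) be compact topological graphs that are locally conjugate via a homeomorphism τ : E^0 → F^0, and assume every finite open cover of E^0 admits a finite open refinement, still covering E^0, in which any three pairwise distinct members have empty intersection (i.e. the covering dimension of E^0 is at most 1). Then there exists a finite open cover (U_i)_{1≤i≤n} of E^0 which is admissible, i.e. satisfies: (C1) for each i there exist an integer m(i) and pairwise disjoint open sets U_{i1}, …, U_{i m(i)} ⊆ E^1 with s_E^{-1}(U_i) = ⋃_{k=1}^{m(i)} U_{ik} and s_E mapping each U_{ik} homeomorphically onto U_i; (C2) for each i there is a homeomorphism γ_i of s_E^{-1}(U_i) onto s_F^{-1}(τ(U_i)) with s_F ∘ γ_i = τ ∘ s_E and r_F ∘ γ_i = τ ∘ r_E on s_E^{-1}(U_i); (C3) U_i ∩ U_j ∩ U_k = ∅ whenever i, j, k are pairwise distinct; (C4) closure(U_i) \ U_j and closure(U_j) \ U_i are disjoint for i ≠ j; (C5) if U_i ∩ U_j ≠ ∅, then m(i) = m(j) and there is a permutation π of {1, …, m(i)} such that U_{ik} ∩ U_{jl} ≠ ∅ if and only if l = π(k);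 (C6) the corresponding cover of F given by V_i = τ(U_i) and V_{ik} = γ_i(U_{ik}) also satisfies (C5). -/

import Mathlib

/-- `f` maps `A ⊆ X` homeomorphically onto `B ⊆ Y`: there is a partial homeomorphism
with source `A` and target `B` agreeing with `f` on `A`. -/
def MapsHomeoOn {X Y : Type*} [TopologicalSpace X] [TopologicalSpace Y]
    (f : X → Y) (A : Set X) (B : Set Y) : Prop :=
  ∃ e : PartialHomeomorph X Y, e.source = A ∧ e.target = B ∧ Set.EqOn f e A

open Set Topology

namespace AdmCover

variable {Y X : Type*} [TopologicalSpace Y] [TopologicalSpace X]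

/-- An evenly covered open set with `m` sheets for `s : Y → X`. -/
structure Sheaf (s : Y → X) (m : ℕ) where
  V : Set X
  hV : IsOpen V
  R : Fin m → Set Y
  e : Fin m → OpenPartialHomeomorph Y X
  hsrc : ∀ k, (e k).source = R k
  htgt : ∀ k, (e k).target = V
  heq : ∀ k, Set.EqOn s (e k) (R k)
  hdisj : ∀ k l, k ≠ l → Disjoint (R k) (R l)
  hcup : s ⁻¹' V = ⋃ k, R k

namespace Sheaf

variable {s : Y → X} {m m' m'' : ℕ} (D : Sheaf s m)

theorem hRopen (k : Fin m) : IsOpen (D.R k) := D.hsrc k ▸ (D.e k).open_source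

theorem R_subset (k : Fin m) : D.R k ⊆ s ⁻¹' D.V := D.hcup ▸ subset_iUnion D.R k

/-- The point of the `k`-th sheet over `v`. -/
noncomputable def pt (k : Fin m) (v : X) : Y := (D.e k).symm v

theorem pt_mem {v : X} (hv : v ∈ D.V) (k : Fin m) : D.pt k v ∈ D.R k :=
  D.hsrc k ▸ (D.e k).map_target (D.htgt k ▸ hv)

theorem s_pt {v : X} (hv : v ∈ D.V) (k : Fin m) : s (D.pt k v) = v := by
  have h1 : D.pt k v ∈ D.R k := D.pt_mem hv k
  have := D.heq k h1
  rw [this]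
  exact (D.e k).right_inv (D.htgt k ▸ hv)

theorem pt_unique {v : X} {z : Y} {k : Fin m} (hz : z ∈ D.R k) (hsz : s z = v) :
    z = D.pt k v := by
  have hzs : z ∈ (D.e k).source := D.hsrc k ▸ hz
  have : (D.e k) z = v := by rw [← D.heq k hz]; exact hsz
  rw [pt, ← this]
  exact ((D.e k).left_inv hzs).symm

theorem exists_sheet {z : Y} (hz : z ∈ s ⁻¹' D.V) : ∃ k, z ∈ D.R k := by
  rw [D.hcup] at hz; exact mem_iUnion.1 hz

theorem eq_of_mem_sheets {z : Y} {k l : Fin m} (hk : z ∈ D.R k) (hl : z ∈ D.R l) : k = l := by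
  by_contra h
  exact (D.hdisj k l h).ne_of_mem hk hl rfl

theorem mapsHomeoOn (k : Fin m) : MapsHomeoOn s (D.R k) D.V :=
  ⟨(D.e k).toPartialHomeomorph, D.hsrc k, D.htgt k, D.heq k⟩

/-- Restrict an evenly covered set to a smaller open set. -/
noncomputable def restrict (U : Set X) (hU : IsOpen U) (hpre : IsOpen (s ⁻¹' U))
    (hUV : U ⊆ D.V) : Sheaf s m where
  V := U
  hV := hU
  R k := D.R k ∩ s ⁻¹' U
  e k := (D.e k).restrOpen (s ⁻¹' U) hpre
  hsrc k := by rw [OpenPartialHomeomorph.restrOpen_source, D.hsrc k]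
  htgt k := by
    have h1 : ((D.e k).restrOpen (s ⁻¹' U) hpre).target
        = (D.e k).target ∩ (D.e k).symm ⁻¹' (s ⁻¹' U) := by
      calc ((D.e k).restrOpen (s ⁻¹' U) hpre).target
          = ((D.e k).restrOpen (s ⁻¹' U) hpre).toPartialEquiv.target := rfl
        _ = ((D.e k).toPartialEquiv.restr (s ⁻¹' U)).target := by
              rw [OpenPartialHomeomorph.restrOpen_toPartialEquiv]
        _ = _ := PartialEquiv.restr_target _ _
    ext v
    rw [h1]
    constructor
    · rintro ⟨hv1, hv2⟩
      have hvV : v ∈ D.V := D.htgt k ▸ hv1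
      have : s ((D.e k).symm v) = v := D.s_pt hvV k
      simpa [mem_preimage, this] using hv2
    · intro hv
      have hvV : v ∈ D.V := hUV hv
      refine ⟨D.htgt k ▸ hvV, ?_⟩
      have : s ((D.e k).symm v) = v := D.s_pt hvV k
      simpa [mem_preimage, this] using hv
  heq k := fun z hz => D.heq k hz.1
  hdisj k l h := ((D.hdisj k l h).mono_left inter_subset_left).mono_right inter_subset_left
  hcup := by
    rw [← iUnion_inter, ← D.hcup]
    exact (inter_eq_right.2 (preimage_mono hUV)).symm

@[simp] theorem restrict_V (U : Set X) (hU hpre hUV) : (D.restrict U hU hpre hUV).V = U := rfl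
@[simp] theorem restrict_R (U : Set X) (hU hpre hUV) (k : Fin m) :
    (D.restrict U hU hpre hUV).R k = D.R k ∩ s ⁻¹' U := rfl


/-- The set of base points over which the transition from `D` to `D'` is `σ`. -/
def Omega (D : Sheaf s m) (D' : Sheaf s m') (σ : Fin m → Fin m') : Set X :=
  (D.V ∩ D'.V) ∩ ⋂ k, ((D.e k).symm.source ∩ (D.e k).symm ⁻¹' (D'.R (σ k)))

theorem Omega_open (D : Sheaf s m) (D' : Sheaf s m') (σ : Fin m → Fin m') :
    IsOpen (Omega D D' σ) :=
  (D.hV.inter D'.hV).inter <| isOpen_iInter_of_finite fun k =>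
    (D.e k).symm.isOpen_inter_preimage (D'.hRopen (σ k))

theorem mem_Omega {D : Sheaf s m} {D' : Sheaf s m'} {σ : Fin m → Fin m'} {v : X} :
    v ∈ Omega D D' σ ↔ v ∈ D.V ∧ v ∈ D'.V ∧ ∀ k, D.pt k v ∈ D'.R (σ k) := by
  unfold Omega
  simp only [mem_inter_iff, mem_iInter, mem_preimage, OpenPartialHomeomorph.symm_source]
  constructor
  · rintro ⟨⟨h1, h2⟩, h3⟩
    exact ⟨h1, h2, fun k => (h3 k).2⟩
  · rintro ⟨h1, h2, h3⟩
    exact ⟨⟨h1, h2⟩, fun k => ⟨D.htgt k ▸ h1, h3 k⟩⟩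

theorem exists_mem_Omega (D : Sheaf s m) (D' : Sheaf s m') {v : X}
    (hv : v ∈ D.V) (hv' : v ∈ D'.V) : ∃ σ : Fin m → Fin m', v ∈ Omega D D' σ := by
  have h : ∀ k : Fin m, ∃ l, D.pt k v ∈ D'.R l := by
    intro k
    apply D'.exists_sheet
    rw [mem_preimage, D.s_pt hv k]
    exact hv'
  choose σ hσ using h
  exact ⟨σ, mem_Omega.2 ⟨hv, hv', hσ⟩⟩

/-- Transitivity of transitions. -/
theorem Omega_trans {D : Sheaf s m} {Dt : Sheaf s m'} {D' : Sheaf s m''}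
    {σ₁ : Fin m → Fin m'} {σ₂ : Fin m' → Fin m''} {v : X}
    (h1 : v ∈ Omega D Dt σ₁) (h2 : v ∈ Omega Dt D' σ₂) (k : Fin m) :
    D.pt k v ∈ D'.R (σ₂ (σ₁ k)) := by
  obtain ⟨hvD, hvDt, hσ₁⟩ := mem_Omega.1 h1
  obtain ⟨-, hvD', hσ₂⟩ := mem_Omega.1 h2
  have h3 : D.pt k v = Dt.pt (σ₁ k) v := Dt.pt_unique (hσ₁ k) (D.s_pt hvD k)
  rw [h3]
  exact hσ₂ (σ₁ k)

/-- The abstract matching lemma: if the transition over `A ∩ B` is the constant `σ`, then the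
sheets over `A` and `B` match up via a bijection. -/
theorem match_of_const (D : Sheaf s m) (D' : Sheaf s m') {A B : Set X}
    (hA : A ⊆ D.V) (hB : B ⊆ D'.V) (hne : (A ∩ B).Nonempty) (σ : Fin m → Fin m')
    (hσ : ∀ v ∈ A ∩ B, ∀ k, D.pt k v ∈ D'.R (σ k)) :
    ∃ π : Fin m ≃ Fin m',
      ∀ k l, ((D.R k ∩ s ⁻¹' A) ∩ (D'.R l ∩ s ⁻¹' B)).Nonempty ↔ l = π k := by
  obtain ⟨v, hv⟩ := hne
  have hvD : v ∈ D.V := hA hv.1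
  have hvD' : v ∈ D'.V := hB hv.2
  have hinj : Function.Injective σ := by
    intro k k' h
    have h1 : D.pt k v = D'.pt (σ k) v := D'.pt_unique (hσ v hv k) (D.s_pt hvD k)
    have h2 : D.pt k' v = D'.pt (σ k') v := D'.pt_unique (hσ v hv k') (D.s_pt hvD k')
    have h3 : D.pt k v = D.pt k' v := by rw [h1, h2, h]
    exact D.eq_of_mem_sheets (D.pt_mem hvD k) (h3 ▸ D.pt_mem hvD k')
  have hsurj : Function.Surjective σ := by
    intro l
    have hz : D'.pt l v ∈ s ⁻¹' D.V := by
      rw [mem_preimage, D'.s_pt hvD' l]; exact hvD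
    obtain ⟨k, hk⟩ := D.exists_sheet hz
    have h1 : D'.pt l v = D.pt k v := D.pt_unique hk (D'.s_pt hvD' l)
    have h2 : D.pt k v ∈ D'.R l := h1 ▸ D'.pt_mem hvD' l
    exact ⟨k, (D'.eq_of_mem_sheets (hσ v hv k) h2)⟩
  refine ⟨Equiv.ofBijective σ ⟨hinj, hsurj⟩, fun k l => ?_⟩
  constructor
  · rintro ⟨z, ⟨hzk, hzA⟩, hzl, hzB⟩
    have hw : s z ∈ A ∩ B := ⟨hzA, hzB⟩
    have h1 : z = D.pt k (s z) := D.pt_unique hzk rfl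
    have h2 : z ∈ D'.R (σ k) := h1 ▸ hσ (s z) hw k
    exact D'.eq_of_mem_sheets hzl h2
  · rintro rfl
    refine ⟨D.pt k v, ⟨D.pt_mem hvD k, ?_⟩, hσ v hv k, ?_⟩
    · rw [mem_preimage, D.s_pt hvD k]; exact hv.1
    · rw [mem_preimage, D.s_pt hvD k]; exact hv.2


/-- Every point of the base of a local homeomorphism with compact Hausdorff total space has an
evenly covered open neighbourhood. -/
theorem exists_sheaf_mem {s : Y → X} [CompactSpace Y] [T2Space Y] [T2Space X]
    (hs : IsLocalHomeomorph s) (u : X) : ∃ (m : ℕ) (D : Sheaf s m), u ∈ D.V := by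
  classical
  have hcont : Continuous s := hs.continuous
  choose E hE1 hE2 using (hs : ∀ z : Y, ∃ e : OpenPartialHomeomorph Y X, z ∈ e.source ∧ s = e)
  -- the fiber over `u` is finite
  have hΦcl : IsClosed (s ⁻¹' {u}) := isClosed_singleton.preimage hcont
  have hsub : ∀ z : Y, ((E z).source ∩ s ⁻¹' {u}).Subsingleton := by
    intro z z1 hz1 z2 hz2
    have h1 : (E z) z1 = (E z) z2 := by
      rw [← hE2 z]
      rw [mem_inter_iff, mem_preimage, mem_singleton_iff] at hz1 hz2
      rw [hz1.2, hz2.2]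
    exact (E z).injOn hz1.1 hz2.1 h1
  have hΦfin : (s ⁻¹' {u}).Finite := by
    obtain ⟨t, ht⟩ := hΦcl.isCompact.elim_finite_subcover (fun z => (E z).source)
      (fun z => (E z).open_source) (fun z hz => mem_iUnion.2 ⟨z, hE1 z⟩)
    have : s ⁻¹' {u} = ⋃ z ∈ t, ((E z).source ∩ s ⁻¹' {u}) := by
      ext y
      simp only [mem_iUnion, mem_inter_iff, exists_prop]
      constructor
      · intro hy
        obtain ⟨z, hz1, hz2⟩ := mem_iUnion₂.1 (ht hy)
        exact ⟨z, hz1, hz2, hy⟩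
      · rintro ⟨z, -, -, hy⟩; exact hy
    rw [this]
    exact t.finite_toSet.biUnion fun z _ => (hsub z).finite
  -- enumerate the fiber
  obtain ⟨m, x, hxinj, hxr⟩ : ∃ (m : ℕ) (x : Fin m → Y), Function.Injective x ∧
      range x = s ⁻¹' {u} := by
    have hft := hΦfin.fintype
    refine ⟨Fintype.card (s ⁻¹' {u} : Set Y),
      fun i => (((Fintype.equivFin (s ⁻¹' {u} : Set Y)).symm i : (s ⁻¹' {u} : Set Y)) : Y),
      Subtype.coe_injective.comp (Fintype.equivFin _).symm.injective, ?_⟩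
    ext y
    constructor
    · rintro ⟨i, rfl⟩
      exact (((Fintype.equivFin (s ⁻¹' {u} : Set Y)).symm i : (s ⁻¹' {u} : Set Y))).2
    · intro hy
      exact ⟨Fintype.equivFin (s ⁻¹' {u} : Set Y) ⟨y, hy⟩, by simp⟩
  have hxu : ∀ i, s (x i) = u := by
    intro i
    have : x i ∈ s ⁻¹' {u} := hxr ▸ mem_range_self i
    simpa using this
  -- pairwise disjoint open neighbourhoods of the fiber points
  have hsep : ∀ i j : Fin m, i ≠ j → ∃ AB : Set Y × Set Y, IsOpen AB.1 ∧ IsOpen AB.2 ∧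
      x i ∈ AB.1 ∧ x j ∈ AB.2 ∧ Disjoint AB.1 AB.2 := by
    intro i j h
    obtain ⟨A, B, hA, hB, hiA, hjB, hd⟩ := t2_separation (hxinj.ne h)
    exact ⟨(A, B), hA, hB, hiA, hjB, hd⟩
  choose W hW1 hW2 hW3 hW4 hW5 using hsep
  set O : Fin m → Set Y := fun i =>
    (⋂ j, ⋂ (h : i ≠ j), (W i j h).1) ∩ ⋂ j, ⋂ (h : j ≠ i), (W j i h).2 with hO
  have hOopen : ∀ i, IsOpen (O i) := fun i =>
    (isOpen_iInter_of_finite fun j => isOpen_iInter_of_finite fun h => hW1 i j h).inter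
      (isOpen_iInter_of_finite fun j => isOpen_iInter_of_finite fun h => hW2 j i h)
  have hOx : ∀ i, x i ∈ O i := fun i =>
    ⟨mem_iInter.2 fun j => mem_iInter.2 fun h => hW3 i j h,
     mem_iInter.2 fun j => mem_iInter.2 fun h => hW4 j i h⟩
  have hOdisj : ∀ i j, i ≠ j → Disjoint (O i) (O j) := by
    intro i j h
    refine (hW5 i j h).mono ?_ ?_
    · exact inter_subset_left.trans ((iInter_subset _ j).trans (iInter_subset _ h))
    · exact inter_subset_right.trans ((iInter_subset _ i).trans (iInter_subset _ h))
  set src : Fin m → Set Y := fun i => (E (x i)).source ∩ O i with hsrcdef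
  have hsrcopen : ∀ i, IsOpen (src i) := fun i => (E (x i)).open_source.inter (hOopen i)
  set K : Set Y := univ \ ⋃ i, src i with hK
  have hKcl : IsClosed K := isClosed_univ.sdiff (isOpen_iUnion hsrcopen)
  have hsK : IsClosed (s '' K) := (hKcl.isCompact.image hcont).isClosed
  have husK : u ∉ s '' K := by
    rintro ⟨z, hz, hzu⟩
    have : z ∈ range x := hxr ▸ (by simpa using hzu)
    obtain ⟨i, rfl⟩ := this
    exact hz.2 (mem_iUnion.2 ⟨i, hE1 (x i), hOx i⟩)
  have himg : ∀ i, s '' src i = (E (x i)).target ∩ (E (x i)).symm ⁻¹' (O i) := by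
    intro i
    rw [hsrcdef]
    simp only
    rw [hE2 (x i)]
    exact (E (x i)).image_source_inter_eq' (O i)
  set W0 : Set X := (⋂ i, s '' src i) \ s '' K with hW0
  have hW0open : IsOpen W0 := by
    refine IsOpen.sdiff ?_ hsK
    refine isOpen_iInter_of_finite fun i => ?_
    rw [himg i]
    exact (E (x i)).isOpen_inter_preimage_symm (hOopen i)
  have huW0 : u ∈ W0 := by
    refine ⟨mem_iInter.2 fun i => ⟨x i, ⟨hE1 (x i), hOx i⟩, hxu i⟩, husK⟩
  refine ⟨m, ⟨W0, hW0open, fun i => src i ∩ s ⁻¹' W0,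
    fun i => (E (x i)).restrOpen (O i ∩ s ⁻¹' W0)
      ((hOopen i).inter (hW0open.preimage hcont)),
    ?_, ?_, ?_, ?_, ?_⟩, huW0⟩
  · intro i
    rw [OpenPartialHomeomorph.restrOpen_source, hsrcdef]
    simp only
    rw [← inter_assoc]
  · intro i
    have h1 : ((E (x i)).restrOpen (O i ∩ s ⁻¹' W0)
        ((hOopen i).inter (hW0open.preimage hcont))).target
        = (E (x i)).target ∩ (E (x i)).symm ⁻¹' (O i ∩ s ⁻¹' W0) := by
      calc _ = (((E (x i)).restrOpen (O i ∩ s ⁻¹' W0) _).toPartialEquiv).target := rfl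
        _ = (((E (x i)).toPartialEquiv).restr (O i ∩ s ⁻¹' W0)).target := by
              rw [OpenPartialHomeomorph.restrOpen_toPartialEquiv]
        _ = _ := PartialEquiv.restr_target _ _
    rw [h1]
    ext v
    constructor
    · rintro ⟨hv1, hv2⟩
      rw [mem_preimage, mem_inter_iff] at hv2
      have : s ((E (x i)).symm v) = v := by
        rw [hE2 (x i)]; exact (E (x i)).right_inv hv1
      rw [mem_preimage, this] at hv2
      exact hv2.2
    · intro hv
      have hv1 := hv.1
      obtain ⟨z, ⟨hz1, hz2⟩, hz3⟩ := mem_iInter.1 hv1 i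
      have hze : (E (x i)) z = v := by rw [← hE2 (x i)]; exact hz3
      have hvt : v ∈ (E (x i)).target := hze ▸ (E (x i)).map_source hz1
      have hsymm : (E (x i)).symm v = z := by rw [← hze]; exact (E (x i)).left_inv hz1
      exact ⟨hvt, by rw [mem_preimage, hsymm]; exact ⟨hz2, by rw [mem_preimage, hz3]; exact hv⟩⟩
  · exact fun i z _ => congrFun (hE2 (x i)) z
  · intro k l h
    exact (hOdisj k l h).mono (inter_subset_left.trans inter_subset_right)
      (inter_subset_left.trans inter_subset_right)
  · ext z
    simp only [mem_preimage, mem_iUnion, mem_inter_iff]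
    constructor
    · intro hz
      have hzK : z ∉ K := fun hzK => hz.2 ⟨z, hzK, rfl⟩
      have hzcup : z ∈ ⋃ i, src i := by
        by_contra hc
        exact hzK ⟨trivial, hc⟩
      obtain ⟨i, hi⟩ := mem_iUnion.1 hzcup
      exact ⟨i, hi, hz⟩
    · rintro ⟨i, -, hz⟩
      exact hz

end Sheaf


section FSheaf

variable {E0 E1 F0 F1 : Type*} [TopologicalSpace E0] [TopologicalSpace E1]
  [TopologicalSpace F0] [TopologicalSpace F1]

theorem homeo_image_eq_preimage (τ : E0 ≃ₜ F0) (s : Set E0) : τ '' s = τ.symm ⁻¹' s :=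
  Equiv.image_eq_preimage_symm τ.toEquiv s

variable {sE : E1 → E0} {sF' : F1 → F0} {m : ℕ}

/-- Push an evenly covered set forward through a fibrewise homeomorphism `g`. -/
noncomputable def Sheaf.push (DE : Sheaf sE m)
    (g : OpenPartialHomeomorph E1 F1) (τ : E0 ≃ₜ F0)
    (hgsrc : g.source = sE ⁻¹' DE.V) (hgtgt : g.target = sF' ⁻¹' (τ '' DE.V))
    (hkey : ∀ y ∈ g.target, sF' y = τ (sE (g.symm y))) : Sheaf sF' m where
  V := τ '' DE.V
  hV := τ.isOpenMap _ DE.hV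
  R k := g '' DE.R k
  e k := ((g.restrOpen (DE.R k) (DE.hRopen k)).symm.trans (DE.e k)).trans
    τ.toOpenPartialHomeomorph
  hsrc k := by
    have hRsub : DE.R k ⊆ g.source := hgsrc ▸ DE.R_subset k
    have hAsrc : (g.restrOpen (DE.R k) (DE.hRopen k)).source = DE.R k := by
      rw [OpenPartialHomeomorph.restrOpen_source, inter_eq_right.2 hRsub]
    have htA : (g.restrOpen (DE.R k) (DE.hRopen k)).target = g '' DE.R k := by
      have h1 : (g.restrOpen (DE.R k) (DE.hRopen k)).target
          = g.target ∩ g.symm ⁻¹' (DE.R k) := by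
        calc _ = ((g.restrOpen (DE.R k) (DE.hRopen k)).toPartialEquiv).target := rfl
          _ = ((g.toPartialEquiv).restr (DE.R k)).target := by
                rw [OpenPartialHomeomorph.restrOpen_toPartialEquiv]
          _ = _ := PartialEquiv.restr_target _ _
      rw [h1, ← g.image_source_inter_eq', inter_eq_right.2 hRsub]
    rw [OpenPartialHomeomorph.trans_source, OpenPartialHomeomorph.trans_source,
      OpenPartialHomeomorph.symm_source, htA]
    rw [show (τ.toOpenPartialHomeomorph).source = univ from τ.toOpenPartialHomeomorph_source]
    rw [preimage_univ, inter_univ]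
    refine inter_eq_left.2 ?_
    intro y hy
    rw [mem_preimage]
    have hmem := (g.restrOpen (DE.R k) (DE.hRopen k)).map_target (htA.symm ▸ hy)
    rw [hAsrc] at hmem
    rw [DE.hsrc k]
    exact hmem
  htgt k := by
    have hRsub : DE.R k ⊆ g.source := hgsrc ▸ DE.R_subset k
    have hAsrc : (g.restrOpen (DE.R k) (DE.hRopen k)).source = DE.R k := by
      rw [OpenPartialHomeomorph.restrOpen_source, inter_eq_right.2 hRsub]
    rw [OpenPartialHomeomorph.trans_target, OpenPartialHomeomorph.trans_target,
      OpenPartialHomeomorph.symm_target, hAsrc, DE.htgt k]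
    rw [show (τ.toOpenPartialHomeomorph).target = univ from τ.toOpenPartialHomeomorph_target]
    rw [univ_inter]
    have h2 : DE.V ∩ (DE.e k).symm ⁻¹' DE.R k = DE.V := by
      refine inter_eq_left.2 fun v hv => ?_
      rw [mem_preimage]
      exact DE.pt_mem hv k
    rw [h2]
    rw [show ((τ.toOpenPartialHomeomorph).symm : F0 → E0) = (τ.symm : F0 → E0) from rfl]
    exact (homeo_image_eq_preimage τ DE.V).symm
  heq k := by
    intro y hy
    have hRsub : DE.R k ⊆ g.source := hgsrc ▸ DE.R_subset k
    have htA : (g.restrOpen (DE.R k) (DE.hRopen k)).target = g '' DE.R k := by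
      have h1 : (g.restrOpen (DE.R k) (DE.hRopen k)).target
          = g.target ∩ g.symm ⁻¹' (DE.R k) := by
        calc _ = ((g.restrOpen (DE.R k) (DE.hRopen k)).toPartialEquiv).target := rfl
          _ = ((g.toPartialEquiv).restr (DE.R k)).target := by
                rw [OpenPartialHomeomorph.restrOpen_toPartialEquiv]
          _ = _ := PartialEquiv.restr_target _ _
      rw [h1, ← g.image_source_inter_eq', inter_eq_right.2 hRsub]
    have hAsrc : (g.restrOpen (DE.R k) (DE.hRopen k)).source = DE.R k := by
      rw [OpenPartialHomeomorph.restrOpen_source, inter_eq_right.2 hRsub]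
    have hyt : y ∈ (g.restrOpen (DE.R k) (DE.hRopen k)).target := htA ▸ hy
    have hyg : y ∈ g.target := by
      obtain ⟨z, hz, rfl⟩ := hy
      exact g.map_source (hRsub hz)
    have hmem : g.symm y ∈ DE.R k :=
      hAsrc ▸ (g.restrOpen (DE.R k) (DE.hRopen k)).map_target hyt
    show sF' y = τ ((DE.e k) (g.symm y))
    rw [← DE.heq k hmem]
    exact hkey y hyg
  hdisj k l h := by
    have hk : DE.R k ⊆ g.source := hgsrc ▸ DE.R_subset k
    have hl : DE.R l ⊆ g.source := hgsrc ▸ DE.R_subset l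
    rw [Set.disjoint_iff_inter_eq_empty, ← g.injOn.image_inter hk hl,
      (DE.hdisj k l h).inter_eq, image_empty]
  hcup := by
    rw [← image_iUnion, ← DE.hcup, ← hgsrc, g.image_source_eq_target, hgtgt]

@[simp] theorem Sheaf.push_V (DE : Sheaf sE m) (g τ) (h1 h2 h3) :
    (DE.push g τ h1 h2 h3 : Sheaf sF' m).V = τ '' DE.V := rfl
@[simp] theorem Sheaf.push_R (DE : Sheaf sE m) (g τ) (h1 h2 h3) (k : Fin m) :
    (DE.push g τ h1 h2 h3 : Sheaf sF' m).R k = g '' DE.R k := rfl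

end FSheaf


section LocData

variable {E0 E1 F0 F1 : Type*} [TopologicalSpace E0] [TopologicalSpace E1]
  [TopologicalSpace F0] [TopologicalSpace F1]
  {sE : E1 → E0} {sF : F1 → F0} {rE : E1 → E0} {rF : F1 → F0}

/-- Local conjugacy data over an evenly covered open set. -/
structure LocData (sE : E1 → E0) (sF : F1 → F0) (rE : E1 → E0) (rF : F1 → F0)
    (τ : E0 ≃ₜ F0) (m : ℕ) where
  DE : Sheaf sE m
  DF : Sheaf sF m
  γ : E1 → F1
  g : OpenPartialHomeomorph E1 F1
  hgsrc : g.source = sE ⁻¹' DE.V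
  hgtgt : g.target = sF ⁻¹' DF.V
  hVF : DF.V = τ '' DE.V
  hRF : ∀ k, DF.R k = g '' DE.R k
  hγg : Set.EqOn γ g (sE ⁻¹' DE.V)
  hint : ∀ x ∈ sE ⁻¹' DE.V, sF (γ x) = τ (sE x) ∧ rF (γ x) = τ (rE x)

variable {τ : E0 ≃ₜ F0} {m : ℕ}

theorem hkey_of {g0 : OpenPartialHomeomorph E1 F1} {U : Set E0} {γ : E1 → F1}
    (hg0src : g0.source = sE ⁻¹' U) (hγg : Set.EqOn γ g0 (sE ⁻¹' U))
    (hint : ∀ x ∈ sE ⁻¹' U, sF (γ x) = τ (sE x)) :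
    ∀ y ∈ g0.target, sF y = τ (sE (g0.symm y)) := by
  intro y hy
  have hx : g0.symm y ∈ g0.source := g0.map_target hy
  have hx' : g0.symm y ∈ sE ⁻¹' U := hg0src ▸ hx
  have h1 : γ (g0.symm y) = g0 (g0.symm y) := hγg hx'
  have h2 := hint (g0.symm y) hx'
  rw [h1, g0.right_inv hy] at h2
  exact h2

theorem restr_target_eq {g0 : OpenPartialHomeomorph E1 F1} {U V : Set E0}
    (hg0src : g0.source = sE ⁻¹' U) (hg0tgt : g0.target = sF ⁻¹' (τ '' U))
    (hkey : ∀ y ∈ g0.target, sF y = τ (sE (g0.symm y))) (hVU : V ⊆ U)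
    (hpre : IsOpen (sE ⁻¹' V)) :
    (g0.restrOpen (sE ⁻¹' V) hpre).target = sF ⁻¹' (τ '' V) := by
  have h1 : (g0.restrOpen (sE ⁻¹' V) hpre).target
      = g0.target ∩ g0.symm ⁻¹' (sE ⁻¹' V) := by
    calc _ = ((g0.restrOpen (sE ⁻¹' V) hpre).toPartialEquiv).target := rfl
      _ = ((g0.toPartialEquiv).restr (sE ⁻¹' V)).target := by
            rw [OpenPartialHomeomorph.restrOpen_toPartialEquiv]
      _ = _ := PartialEquiv.restr_target _ _
  rw [h1]
  ext y
  constructor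
  · rintro ⟨hyt, hy2⟩
    rw [mem_preimage]
    rw [mem_preimage, mem_preimage] at hy2
    have := hkey y hyt
    rw [this]
    exact mem_image_of_mem _ hy2
  · intro hy
    rw [mem_preimage] at hy
    obtain ⟨w, hwV, hw⟩ := hy
    have hyt : y ∈ g0.target := by
      rw [hg0tgt, mem_preimage, ← hw]
      exact mem_image_of_mem _ (hVU hwV)
    refine ⟨hyt, ?_⟩
    rw [mem_preimage, mem_preimage]
    have h2 := hkey y hyt
    have h3 : sE (g0.symm y) = w := τ.injective (by rw [← h2, hw])
    rw [h3]
    exact hwV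

theorem restr_source_eq {g0 : OpenPartialHomeomorph E1 F1} {U V : Set E0}
    (hg0src : g0.source = sE ⁻¹' U) (hVU : V ⊆ U) (hpre : IsOpen (sE ⁻¹' V)) :
    (g0.restrOpen (sE ⁻¹' V) hpre).source = sE ⁻¹' V := by
  rw [OpenPartialHomeomorph.restrOpen_source, hg0src,
    inter_eq_right.2 (preimage_mono hVU)]

/-- Restrict local conjugacy data to a smaller open set. -/
noncomputable def LocData.restrict (L : LocData sE sF rE rF τ m) (U : Set E0) (hU : IsOpen U)
    (hUV : U ⊆ L.DE.V) (hsEc : Continuous sE) (hsFc : Continuous sF) :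
    LocData sE sF rE rF τ m := by
  have hpreE : IsOpen (sE ⁻¹' U) := hU.preimage hsEc
  have hpreF : IsOpen (sF ⁻¹' (τ '' U)) := (τ.isOpenMap U hU).preimage hsFc
  have hUVF : τ '' U ⊆ L.DF.V := L.hVF ▸ image_mono hUV
  have hg0tgt : L.g.target = sF ⁻¹' (τ '' L.DE.V) := by rw [L.hgtgt, L.hVF]
  have hkey : ∀ y ∈ L.g.target, sF y = τ (sE (L.g.symm y)) :=
    hkey_of L.hgsrc L.hγg (fun x hx => (L.hint x hx).1)
  refine ⟨L.DE.restrict U hU hpreE hUV, L.DF.restrict (τ '' U) (τ.isOpenMap U hU) hpreF hUVF,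
    L.γ, L.g.restrOpen (sE ⁻¹' U) hpreE, ?_, ?_, rfl, ?_, ?_, ?_⟩
  · exact restr_source_eq L.hgsrc hUV hpreE
  · exact restr_target_eq L.hgsrc hg0tgt hkey hUV hpreE
  · intro k
    show L.DF.R k ∩ sF ⁻¹' (τ '' U) = _ '' (L.DE.R k ∩ sE ⁻¹' U)
    have hcoe : ∀ z, (L.g.restrOpen (sE ⁻¹' U) hpreE) z = L.g z := fun z => rfl
    have himg : (L.g.restrOpen (sE ⁻¹' U) hpreE) '' (L.DE.R k ∩ sE ⁻¹' U)
        = L.g '' (L.DE.R k ∩ sE ⁻¹' U) := image_congr fun z _ => hcoe z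
    rw [himg]
    have hk : L.DE.R k ⊆ L.g.source := L.hgsrc ▸ L.DE.R_subset k
    have hu : sE ⁻¹' U ⊆ L.g.source := L.hgsrc ▸ preimage_mono hUV
    rw [L.g.injOn.image_inter hk hu, ← L.hRF k]
    have h2 : (L.g.restrOpen (sE ⁻¹' U) hpreE).target
        = L.g.target ∩ L.g.symm ⁻¹' (sE ⁻¹' U) := by
      calc _ = ((L.g.restrOpen (sE ⁻¹' U) hpreE).toPartialEquiv).target := rfl
        _ = ((L.g.toPartialEquiv).restr (sE ⁻¹' U)).target := by
              rw [OpenPartialHomeomorph.restrOpen_toPartialEquiv]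
        _ = _ := PartialEquiv.restr_target _ _
    have h3 : L.g.target ∩ L.g.symm ⁻¹' (sE ⁻¹' U) = sF ⁻¹' (τ '' U) := by
      rw [← h2]
      exact restr_target_eq L.hgsrc hg0tgt hkey hUV hpreE
    have h1 : L.g '' (sE ⁻¹' U) = L.g '' (L.g.source ∩ sE ⁻¹' U) := by
      rw [inter_eq_right.2 hu]
    rw [h1, L.g.image_source_inter_eq', h3]
  · exact fun z hz => L.hγg (preimage_mono hUV hz)
  · exact fun x hx => L.hint x (preimage_mono hUV hx)

@[simp] theorem LocData.restrict_DE_V (L : LocData sE sF rE rF τ m) (U hU hUV h1 h2) :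
    ((L.restrict U hU hUV h1 h2).DE).V = U := rfl
@[simp] theorem LocData.restrict_DE_R (L : LocData sE sF rE rF τ m) (U hU hUV h1 h2) (k) :
    ((L.restrict U hU hUV h1 h2).DE).R k = L.DE.R k ∩ sE ⁻¹' U := rfl
@[simp] theorem LocData.restrict_DF_V (L : LocData sE sF rE rF τ m) (U hU hUV h1 h2) :
    ((L.restrict U hU hUV h1 h2).DF).V = τ '' U := rfl
@[simp] theorem LocData.restrict_DF_R (L : LocData sE sF rE rF τ m) (U hU hUV h1 h2) (k) :
    ((L.restrict U hU hUV h1 h2).DF).R k = L.DF.R k ∩ sF ⁻¹' (τ '' U) := rfl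
@[simp] theorem LocData.restrict_gamma (L : LocData sE sF rE rF τ m) (U hU hUV h1 h2) :
    (L.restrict U hU hUV h1 h2).γ = L.γ := rfl

/-- Existence of local conjugacy data around every point. -/
theorem exists_locData [CompactSpace E1] [T2Space E1] [T2Space E0]
    (hsE : IsLocalHomeomorph sE) (hsFc : Continuous sF)
    (hconj : ∀ u : E0, ∃ U : Set E0, IsOpen U ∧ u ∈ U ∧
      ∃ γ : E1 → F1, MapsHomeoOn γ (sE ⁻¹' U) (sF ⁻¹' (τ '' U)) ∧
        ∀ x ∈ sE ⁻¹' U, sF (γ x) = τ (sE x) ∧ rF (γ x) = τ (rE x)) (u : E0) :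
    ∃ (m : ℕ) (L : LocData sE sF rE rF τ m), u ∈ L.DE.V := by
  obtain ⟨m, D0, huD⟩ := Sheaf.exists_sheaf_mem hsE u
  obtain ⟨U, hUopen, huU, γ, ⟨g0', hg0src', hg0tgt', hγg'⟩, hint⟩ := hconj u
  let g0 : OpenPartialHomeomorph E1 F1 := ⟨g0', by rw [hg0src']; exact hUopen.preimage hsE.continuous,
    by rw [hg0tgt']; exact (τ.isOpenMap U hUopen).preimage hsFc⟩
  have hg0src : g0.source = sE ⁻¹' U := hg0src'
  have hg0tgt : g0.target = sF ⁻¹' (τ '' U) := hg0tgt'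
  have hγg : Set.EqOn γ g0 (sE ⁻¹' U) := hγg'
  have hsEc : Continuous sE := hsE.continuous
  set V : Set E0 := U ∩ D0.V with hVdef
  have hVopen : IsOpen V := hUopen.inter D0.hV
  have hpreE : IsOpen (sE ⁻¹' V) := hVopen.preimage hsEc
  have hγg' : Set.EqOn γ g0 (sE ⁻¹' U) := hg0src ▸ hγg
  have hkey : ∀ y ∈ g0.target, sF y = τ (sE (g0.symm y)) :=
    hkey_of hg0src hγg' (fun x hx => (hint x hx).1)
  have hDE : Sheaf sE m := D0.restrict V hVopen hpreE inter_subset_right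
  set g : OpenPartialHomeomorph E1 F1 := g0.restrOpen (sE ⁻¹' V) hpreE with hgdef
  have hgsrc : g.source = sE ⁻¹' V := restr_source_eq hg0src inter_subset_left hpreE
  have hgtgt : g.target = sF ⁻¹' (τ '' V) :=
    restr_target_eq hg0src hg0tgt hkey inter_subset_left hpreE
  have hkey2 : ∀ y ∈ g.target, sF y = τ (sE (g.symm y)) := by
    intro y hy
    have h2 : (g0.restrOpen (sE ⁻¹' V) hpreE).target
        = g0.target ∩ g0.symm ⁻¹' (sE ⁻¹' V) := by
      calc _ = ((g0.restrOpen (sE ⁻¹' V) hpreE).toPartialEquiv).target := rfl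
        _ = ((g0.toPartialEquiv).restr (sE ⁻¹' V)).target := by
              rw [OpenPartialHomeomorph.restrOpen_toPartialEquiv]
        _ = _ := PartialEquiv.restr_target _ _
    have hy' : y ∈ g0.target := by
      have := h2 ▸ (hgdef ▸ hy)
      exact this.1
    exact hkey y hy'
  set DE : Sheaf sE m := D0.restrict V hVopen hpreE inter_subset_right with hDEdef
  have hDEV : DE.V = V := rfl
  refine ⟨m, ⟨DE, DE.push g τ hgsrc hgtgt hkey2, γ, g,
    hgsrc, hgtgt, rfl, fun k => rfl, ?_, ?_⟩, ⟨huU, huD⟩⟩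
  · exact fun z hz => hγg' (preimage_mono inter_subset_left hz)
  · exact fun x hx => hint x (preimage_mono inter_subset_left hx)

end LocData


section Cover

variable {X : Type*} [TopologicalSpace X] [NormalSpace X]

theorem sep_single {K C : Set X} (hK : IsClosed K) (hC : IsClosed C) (hd : Disjoint K C) :
    ∃ O : Set X, IsOpen O ∧ K ⊆ O ∧ Disjoint (closure O) C := by
  obtain ⟨O, hO, hKO, hcl⟩ := normal_exists_closure_subset hK hC.isOpen_compl
    (subset_compl_iff_disjoint_right.2 hd)
  exact ⟨O, hO, hKO, subset_compl_iff_disjoint_right.1 hcl⟩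

theorem sepFamily_fin : ∀ (n : ℕ) (K Z : Fin n → Set X), (∀ i, IsClosed (K i)) →
    (∀ i, IsClosed (Z i)) → (∀ i, Disjoint (K i) (Z i)) →
    (∀ i j, i ≠ j → Disjoint (K i) (K j)) →
    ∃ O : Fin n → Set X, (∀ i, IsOpen (O i)) ∧ (∀ i, K i ⊆ O i) ∧
      (∀ i, Disjoint (closure (O i)) (Z i)) ∧
      ∀ i j, i ≠ j → Disjoint (closure (O i)) (closure (O j)) := by
  intro n
  induction n with
  | zero => exact fun K Z _ _ _ _ => ⟨fun i => ∅, fun i => i.elim0, fun i => i.elim0,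
      fun i => i.elim0, fun i => i.elim0⟩
  | succ n ih =>
    intro K Z hKcl hZcl hKZ hKK
    obtain ⟨O', hO'o, hO'K, hO'Z, hO'd⟩ := ih (fun i => K i.castSucc)
      (fun i => Z i.castSucc ∪ K (Fin.last n)) (fun i => hKcl _)
      (fun i => (hZcl _).union (hKcl _))
      (fun i => Disjoint.union_right (hKZ _) (hKK _ _ (Fin.castSucc_lt_last i).ne))
      (fun i j h => hKK _ _ (fun hc => h (Fin.castSucc_injective n hc)))
    have hCcl : IsClosed (Z (Fin.last n) ∪ ⋃ i, closure (O' i)) :=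
      (hZcl _).union (isClosed_iUnion_of_finite fun i => isClosed_closure)
    have hdisj : Disjoint (K (Fin.last n)) (Z (Fin.last n) ∪ ⋃ i, closure (O' i)) := by
      refine Disjoint.union_right (hKZ _) ?_
      rw [disjoint_iUnion_right]
      intro i
      exact ((hO'Z i).mono_right subset_union_right).symm
    obtain ⟨Ol, hOlo, hOlK, hOld⟩ := sep_single (hKcl _) hCcl hdisj
    refine ⟨Fin.lastCases Ol O', ?_, ?_, ?_, ?_⟩
    · intro i
      induction i using Fin.lastCases with
      | last => simpa using hOlo
      | cast i => simpa using hO'o i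
    · intro i
      induction i using Fin.lastCases with
      | last => simpa using hOlK
      | cast i => simpa using hO'K i
    · intro i
      induction i using Fin.lastCases with
      | last => simpa using hOld.mono_right subset_union_left
      | cast i => simpa using (hO'Z i).mono_right subset_union_left
    · intro i j hij
      induction i using Fin.lastCases with
      | last =>
        induction j using Fin.lastCases with
        | last => exact absurd rfl hij
        | cast j =>
          simp only [Fin.lastCases_last, Fin.lastCases_castSucc]
          exact hOld.mono_right ((subset_iUnion (fun i => closure (O' i)) j).trans
            subset_union_right)
      | cast i =>
        induction j using Fin.lastCases with
        | last =>
          simp only [Fin.lastCases_last, Fin.lastCases_castSucc]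
          exact (hOld.mono_right ((subset_iUnion (fun i => closure (O' i)) i).trans
            subset_union_right)).symm
        | cast j =>
          simp only [Fin.lastCases_castSucc]
          exact hO'd i j (fun hc => hij (by rw [hc]))

theorem sepFamily {ι : Type*} [Fintype ι] (K Z : ι → Set X) (hKcl : ∀ i, IsClosed (K i))
    (hZcl : ∀ i, IsClosed (Z i)) (hKZ : ∀ i, Disjoint (K i) (Z i))
    (hKK : ∀ i j, i ≠ j → Disjoint (K i) (K j)) :
    ∃ O : ι → Set X, (∀ i, IsOpen (O i)) ∧ (∀ i, K i ⊆ O i) ∧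
      (∀ i, Disjoint (closure (O i)) (Z i)) ∧
      ∀ i j, i ≠ j → Disjoint (closure (O i)) (closure (O j)) := by
  classical
  set e := Fintype.equivFin ι
  obtain ⟨O', h1, h2, h3, h4⟩ := sepFamily_fin (Fintype.card ι) (fun i => K (e.symm i))
    (fun i => Z (e.symm i)) (fun i => hKcl _) (fun i => hZcl _) (fun i => hKZ _)
    (fun i j h => hKK _ _ (fun hc => h (e.symm.injective hc)))
  refine ⟨fun i => O' (e i), fun i => h1 _, fun i => by simpa using h2 (e i),
    fun i => by simpa using h3 (e i), fun i j h => h4 _ _ (fun hc => h (e.injective hc))⟩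

/-- Index type for unordered pairs of distinct indices. -/
abbrev PairIdx (M : ℕ) := {p : Fin M × Fin M // p.1 < p.2}

variable {M : ℕ}

/-- `p` involves the index `j`. -/
def pmem (p : PairIdx M) (j : Fin M) : Prop := p.1.1 = j ∨ p.1.2 = j

/-- The canonical pair on two distinct indices. -/
def pp (i j : Fin M) (h : i ≠ j) : PairIdx M :=
  if hlt : i < j then ⟨(i, j), hlt⟩ else ⟨(j, i), h.lt_or_gt.resolve_left hlt⟩

theorem pmem_pp_left (i j : Fin M) (h : i ≠ j) : pmem (pp i j h) i := by
  unfold pp pmem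
  split <;> simp

theorem pmem_pp_right (i j : Fin M) (h : i ≠ j) : pmem (pp i j h) j := by
  unfold pp pmem
  split <;> simp

theorem pmem_pp_elim {i j k : Fin M} {h : i ≠ j} (hk : pmem (pp i j h) k) : k = i ∨ k = j := by
  unfold pp at hk
  unfold pmem at hk
  split at hk <;> simp only at hk <;> tauto

theorem pmem_unique {p : PairIdx M} {i j : Fin M} (h : i ≠ j) (hi : pmem p i)
    (hj : pmem p j) : p = pp i j h := by
  obtain ⟨⟨a, b⟩, hab⟩ := p
  unfold pmem at hi hj
  simp only at hi hj
  unfold pp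
  rcases hi with rfl | rfl <;> rcases hj with rfl | rfl
  · exact absurd rfl h
  · rw [dif_pos hab]
  · rw [dif_neg (fun hc => absurd (hab.trans hc) (lt_irrefl _))]
  · exact absurd rfl h

/-- Construction of a cover satisfying (C3) and (C4) refining a given cover of order `≤ 2`. -/
theorem exists_nice_cover (B : Fin M → Set X) (hBo : ∀ j, IsOpen (B j))
    (hBc : (⋃ j, B j) = univ)
    (hord : ∀ i j k : Fin M, i ≠ j → j ≠ k → i ≠ k → B i ∩ B j ∩ B k = ∅) :
    ∃ U : Fin M → Set X, (∀ j, IsOpen (U j)) ∧ (⋃ j, U j) = univ ∧ (∀ j, U j ⊆ B j) ∧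
      (∀ i j k, i ≠ j → j ≠ k → i ≠ k → U i ∩ U j ∩ U k = ∅) ∧
      (∀ i j, i ≠ j → closure (U i) ∩ closure (U j) ⊆ U i ∪ U j) := by
  classical
  obtain ⟨D, hDc, hDo, hDcl⟩ := exists_iUnion_eq_closure_subset hBo
    (fun x => Set.toFinite _) hBc
  set F : Fin M → Set X := fun j => closure (D j) with hFdef
  have hFcl : ∀ j, IsClosed (F j) := fun j => isClosed_closure
  have hFB : ∀ j, F j ⊆ B j := hDcl
  have hFcov : (⋃ j, F j) = univ := by
    apply eq_univ_of_univ_subset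
    rw [← hDc]
    exact iUnion_mono fun j => subset_closure
  have hFtriple : ∀ i j k : Fin M, i ≠ j → j ≠ k → i ≠ k → F i ∩ F j ∩ F k = ∅ := by
    intro i j k h1 h2 h3
    rw [← subset_empty_iff, ← hord i j k h1 h2 h3]
    exact inter_subset_inter (inter_subset_inter (hFB i) (hFB j)) (hFB k)
  -- the pair separation
  set K2 : PairIdx M → Set X := fun p => F p.1.1 ∩ F p.1.2 with hK2def
  set Z2 : PairIdx M → Set X := fun p =>
    (B p.1.1 ∩ B p.1.2)ᶜ ∪ ⋃ k, ⋃ (_ : k ≠ p.1.1 ∧ k ≠ p.1.2), F k with hZ2def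
  have hK2cl : ∀ p, IsClosed (K2 p) := fun p => (hFcl _).inter (hFcl _)
  have hZ2cl : ∀ p, IsClosed (Z2 p) := fun p =>
    (((hBo _).inter (hBo _)).isClosed_compl).union
      (isClosed_iUnion_of_finite fun k => isClosed_iUnion_of_finite fun _ => hFcl k)
  have hK2Z2 : ∀ p, Disjoint (K2 p) (Z2 p) := by
    intro p
    rw [Set.disjoint_left]
    rintro x ⟨hx1, hx2⟩ hx3
    rcases hx3 with hx3 | hx3
    · exact hx3 ⟨hFB _ hx1, hFB _ hx2⟩
    · obtain ⟨k, hk⟩ := mem_iUnion.1 hx3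
      obtain ⟨⟨hk1, hk2⟩, hxk⟩ := mem_iUnion.1 hk
      have h0 := hFtriple p.1.1 p.1.2 k p.2.ne (Ne.symm hk2) (Ne.symm hk1)
      have hx : x ∈ F p.1.1 ∩ F p.1.2 ∩ F k := ⟨⟨hx1, hx2⟩, hxk⟩
      rw [h0] at hx
      exact hx
  have hK2K2 : ∀ p q : PairIdx M, p ≠ q → Disjoint (K2 p) (K2 q) := by
    intro p q hpq
    rw [Set.disjoint_left]
    rintro x ⟨hxi, hxj⟩ ⟨hxk, hxl⟩
    obtain ⟨⟨i, j⟩, hij⟩ := p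
    obtain ⟨⟨k, l⟩, hkl⟩ := q
    simp only at hxi hxj hxk hxl hij hkl
    by_cases hki : k = i
    · subst hki
      have hjl : j ≠ l := by
        intro hc; subst hc; exact hpq rfl
      have h0 := hFtriple k j l hij.ne hjl hkl.ne
      have hx : x ∈ F k ∩ F j ∩ F l := ⟨⟨hxi, hxj⟩, hxl⟩
      rw [h0] at hx; exact hx
    · by_cases hkj : k = j
      · subst hkj
        have hil : i ≠ l := fun hc => absurd (hc ▸ hij) (fun hh =>
          absurd (hh.trans hkl) (lt_irrefl _))
        have h0 := hFtriple i k l hij.ne hkl.ne hil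
        have hx : x ∈ F i ∩ F k ∩ F l := ⟨⟨hxi, hxj⟩, hxl⟩
        rw [h0] at hx; exact hx
      · have h0 := hFtriple i j k hij.ne (fun hc => hkj hc.symm) (fun hc => hki hc.symm)
        have hx : x ∈ F i ∩ F j ∩ F k := ⟨⟨hxi, hxj⟩, hxk⟩
        rw [h0] at hx; exact hx
  obtain ⟨P, hPo, hPK, hPZ, hPP⟩ := sepFamily K2 Z2 hK2cl hZ2cl hK2Z2 hK2K2
  have hclPB : ∀ p : PairIdx M, closure (P p) ⊆ B p.1.1 ∩ B p.1.2 := by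
    intro p x hx
    by_contra hc
    exact (hPZ p).ne_of_mem hx (Or.inl hc) rfl
  have hclPF : ∀ (p : PairIdx M) (k : Fin M), k ≠ p.1.1 → k ≠ p.1.2 →
      Disjoint (closure (P p)) (F k) := by
    intro p k h1 h2
    refine (hPZ p).mono_right ?_
    refine subset_union_right.trans' ?_
    exact subset_iUnion₂ (s := fun k _ => F k) k ⟨h1, h2⟩
  -- the singles
  set G : Fin M → Set X := fun j => F j \ ⋃ p : PairIdx M, ⋃ (_ : pmem p j), P p with hGdef
  have hGcl : ∀ j, IsClosed (G j) :=
    fun j => (hFcl j).sdiff (isOpen_iUnion fun p => isOpen_iUnion fun _ => hPo p)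
  have hGF : ∀ j, G j ⊆ F j := fun j => diff_subset
  have hGG : ∀ i j, i ≠ j → Disjoint (G i) (G j) := by
    intro i j hij
    rw [Set.disjoint_left]
    rintro x ⟨hxi, hxPi⟩ ⟨hxj, hxPj⟩
    have hxK : x ∈ K2 (pp i j hij) := by
      show x ∈ F _ ∩ F _
      unfold pp
      split
      · exact ⟨hxi, hxj⟩
      · exact ⟨hxj, hxi⟩
    exact hxPi (mem_iUnion.2 ⟨pp i j hij, mem_iUnion.2 ⟨pmem_pp_left i j hij, hPK _ hxK⟩⟩)
  set ZQ : Fin M → Set X := fun j =>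
    (B j)ᶜ ∪ ⋃ p, ⋃ (_ : ¬ pmem p j), closure (P p) with hZQdef
  have hZQcl : ∀ j, IsClosed (ZQ j) := fun j => (hBo j).isClosed_compl.union
    (isClosed_iUnion_of_finite fun p => isClosed_iUnion_of_finite fun _ => isClosed_closure)
  have hGZQ : ∀ j, Disjoint (G j) (ZQ j) := by
    intro j
    rw [Set.disjoint_left]
    rintro x hx hx2
    rcases hx2 with h | h
    · exact h (hFB j (hGF j hx))
    · obtain ⟨p, hp⟩ := mem_iUnion.1 h
      obtain ⟨hnp, hxP⟩ := mem_iUnion.1 hp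
      have h1 : j ≠ p.1.1 := fun hc => hnp (Or.inl hc.symm)
      have h2 : j ≠ p.1.2 := fun hc => hnp (Or.inr hc.symm)
      exact (hclPF p j h1 h2).ne_of_mem hxP (hGF j hx) rfl
  obtain ⟨Q, hQo, hQG, hQZ, hQQ⟩ := sepFamily G ZQ hGcl hZQcl hGZQ hGG
  have hclQB : ∀ j, closure (Q j) ⊆ B j := by
    intro j x hx
    by_contra hc
    exact (hQZ j).ne_of_mem hx (Or.inl hc) rfl
  have hclQP : ∀ (j : Fin M) (p : PairIdx M), ¬ pmem p j →
      Disjoint (closure (Q j)) (closure (P p)) := by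
    intro j p hnp
    exact (hQZ j).mono_right (subset_union_right.trans'
      (subset_iUnion₂ (s := fun p _ => closure (P p)) p hnp))
  set U : Fin M → Set X := fun j => Q j ∪ ⋃ p, ⋃ (_ : pmem p j), P p with hUdef
  have hUo : ∀ j, IsOpen (U j) := fun j => (hQo j).union
    (isOpen_iUnion fun p => isOpen_iUnion fun _ => hPo p)
  have hPB : ∀ (p : PairIdx M) (j : Fin M), pmem p j → P p ⊆ B j := by
    intro p j hpj
    refine subset_closure.trans ((hclPB p).trans ?_)
    rcases hpj with h | h
    · rw [h]; exact inter_subset_left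
    · rw [h]; exact inter_subset_right
  have hUB : ∀ j, U j ⊆ B j := fun j => union_subset (subset_closure.trans (hclQB j))
    (iUnion₂_subset fun p hp => hPB p j hp)
  have hUcov : (⋃ j, U j) = univ := by
    apply eq_univ_of_forall
    intro x
    have hx : x ∈ ⋃ j, F j := hFcov.symm ▸ mem_univ x
    obtain ⟨j, hxj⟩ := mem_iUnion.1 hx
    by_cases hxP : x ∈ ⋃ p, ⋃ (_ : pmem p j), P p
    · exact mem_iUnion.2 ⟨j, Or.inr hxP⟩
    · exact mem_iUnion.2 ⟨j, Or.inl (hQG j ⟨hxj, hxP⟩)⟩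
  have hclU : ∀ j, closure (U j) ⊆ closure (Q j) ∪ ⋃ p, ⋃ (_ : pmem p j), closure (P p) := by
    intro j
    refine closure_minimal ?_ ?_
    · exact union_subset_union subset_closure (iUnion₂_mono fun p hp => subset_closure)
    · exact isClosed_closure.union (isClosed_iUnion_of_finite fun p =>
        isClosed_iUnion_of_finite fun _ => isClosed_closure)
  have hkeyCl : ∀ (i j : Fin M) (h : i ≠ j),
      closure (U i) ∩ closure (U j) ⊆ closure (P (pp i j h)) := by
    intro i j h x hx
    obtain ⟨hx1, hx2⟩ := hx
    have hx1' := hclU i hx1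
    have hx2' := hclU j hx2
    rcases hx1' with hq1 | hp1
    · rcases hx2' with hq2 | hp2
      · exact absurd rfl ((hQQ i j h).ne_of_mem hq1 hq2)
      · obtain ⟨p, hp⟩ := mem_iUnion.1 hp2
        obtain ⟨hpj, hxp⟩ := mem_iUnion.1 hp
        by_cases hpi : pmem p i
        · rw [← pmem_unique h hpi hpj]; exact hxp
        · exact absurd rfl ((hclQP i p hpi).ne_of_mem hq1 hxp)
    · obtain ⟨p, hp⟩ := mem_iUnion.1 hp1
      obtain ⟨hpi, hxp⟩ := mem_iUnion.1 hp
      rcases hx2' with hq2 | hp2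
      · by_cases hpj : pmem p j
        · rw [← pmem_unique h hpi hpj]; exact hxp
        · exact absurd rfl ((hclQP j p hpj).ne_of_mem hq2 hxp)
      · obtain ⟨p', hp'⟩ := mem_iUnion.1 hp2
        obtain ⟨hp'j, hxp'⟩ := mem_iUnion.1 hp'
        by_cases hppq : p = p'
        · subst hppq
          rw [← pmem_unique h hpi hp'j]; exact hxp
        · exact absurd rfl ((hPP p p' hppq).ne_of_mem hxp hxp')
  have hC3 : ∀ i j k, i ≠ j → j ≠ k → i ≠ k → U i ∩ U j ∩ U k = ∅ := by
    intro i j k h1 h2 h3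
    rw [eq_empty_iff_forall_notMem]
    rintro x ⟨⟨hxi, hxj⟩, hxk⟩
    have e1 : x ∈ closure (P (pp i j h1)) :=
      hkeyCl i j h1 ⟨subset_closure hxi, subset_closure hxj⟩
    have e2 : x ∈ closure (P (pp j k h2)) :=
      hkeyCl j k h2 ⟨subset_closure hxj, subset_closure hxk⟩
    have hne : pp i j h1 ≠ pp j k h2 := by
      intro hc
      have h4 := pmem_pp_left i j h1
      rw [hc] at h4
      rcases pmem_pp_elim h4 with h5 | h5
      · exact h1 h5
      · exact h3 h5
    exact absurd rfl ((hPP _ _ hne).ne_of_mem e1 e2)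
  have hfront : ∀ (i j : Fin M) (h : i ≠ j), closure (P (pp i j h)) ⊆ U i ∪ U j := by
    intro i j h x hx
    by_cases hxP : x ∈ P (pp i j h)
    · left
      exact Or.inr (mem_iUnion.2 ⟨pp i j h, mem_iUnion.2 ⟨pmem_pp_left i j h, hxP⟩⟩)
    · have hxF : x ∈ ⋃ t, F t := hFcov.symm ▸ mem_univ x
      obtain ⟨t, hxt⟩ := mem_iUnion.1 hxF
      have ht : t = i ∨ t = j := by
        by_contra hc
        push_neg at hc
        have hnp : ¬ pmem (pp i j h) t := by
          intro hp
          rcases pmem_pp_elim hp with h5 | h5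
          · exact hc.1 h5
          · exact hc.2 h5
        have h1 : t ≠ (pp i j h).1.1 := fun hc2 => hnp (Or.inl hc2.symm)
        have h2 : t ≠ (pp i j h).1.2 := fun hc2 => hnp (Or.inr hc2.symm)
        exact (hclPF (pp i j h) t h1 h2).ne_of_mem hx hxt rfl
      have hxG : x ∈ G t := by
        refine ⟨hxt, ?_⟩
        intro hxp
        obtain ⟨p, hp⟩ := mem_iUnion.1 hxp
        obtain ⟨hpt, hxp'⟩ := mem_iUnion.1 hp
        by_cases hppq : p = pp i j h
        · exact hxP (hppq ▸ hxp')
        · exact (hPP p (pp i j h) hppq).ne_of_mem (subset_closure hxp') hx rfl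
      rcases ht with rfl | rfl
      · exact Or.inl (Or.inl (hQG t hxG))
      · exact Or.inr (Or.inl (hQG t hxG))
  refine ⟨U, hUo, hUcov, hUB, hC3, fun i j h => (hkeyCl i j h).trans (hfront i j h)⟩

end Cover

end AdmCover

/-- Let `E` and `F` be compact topological graphs, locally conjugate
via a homeomorphism `τ : E⁰ → F⁰` (hypothesis `hconj`), and assume every finite open
cover of `E⁰` admits a finite open refinement, still covering `E⁰`, in which any three
pairwise distinct members have empty intersection (covering dimension of `E⁰` at
most `1`, hypothesis `hdim`).  Then there exists an admissible finite open cover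
`(U_i)_{1≤i≤n}` of `E⁰`, i.e. one satisfying (C1)–(C6). -/
theorem exists_admissible_cover
    {E0 E1 F0 F1 : Type*}
    [TopologicalSpace E0] [TopologicalSpace E1] [TopologicalSpace F0] [TopologicalSpace F1]
    [CompactSpace E0] [CompactSpace E1] [CompactSpace F0] [CompactSpace F1]
    [T2Space E0] [T2Space E1] [T2Space F0] [T2Space F1]
    (rE sE : E1 → E0) (hrE : Continuous rE) (hsE : IsLocalHomeomorph sE)
    (rF sF : F1 → F0) (hrF : Continuous rF) (hsF : IsLocalHomeomorph sF)
    (τ : E0 ≃ₜ F0)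
    (hconj : ∀ u : E0, ∃ U : Set E0, IsOpen U ∧ u ∈ U ∧
      ∃ γ : E1 → F1, MapsHomeoOn γ (sE ⁻¹' U) (sF ⁻¹' (τ '' U)) ∧
        ∀ x ∈ sE ⁻¹' U, sF (γ x) = τ (sE x) ∧ rF (γ x) = τ (rE x))
    (hdim : ∀ (N : ℕ) (W : Fin N → Set E0), (∀ i, IsOpen (W i)) → (⋃ i, W i) = Set.univ →
      ∃ (M : ℕ) (W' : Fin M → Set E0), (∀ j, IsOpen (W' j)) ∧ (⋃ j, W' j) = Set.univ ∧
        (∀ j, ∃ i, W' j ⊆ W i) ∧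
        (∀ j k l : Fin M, j ≠ k → k ≠ l → j ≠ l → W' j ∩ W' k ∩ W' l = ∅)) :
    ∃ (n : ℕ) (U : Fin n → Set E0) (m : Fin n → ℕ)
      (Ue : (i : Fin n) → Fin (m i) → Set E1) (γ : Fin n → E1 → F1),
      (∀ i, IsOpen (U i)) ∧ (⋃ i, U i) = Set.univ ∧
      -- (C1): each `U i` is evenly covered by the disjoint open sheets `Ue i k`
      (∀ i, (∀ k, IsOpen (Ue i k)) ∧
        (∀ k l, k ≠ l → Disjoint (Ue i k) (Ue i l)) ∧
        sE ⁻¹' (U i) = ⋃ k, Ue i k ∧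
        ∀ k, MapsHomeoOn sE (Ue i k) (U i)) ∧
      -- (C2): local intertwining homeomorphisms `γ i`
      (∀ i, MapsHomeoOn (γ i) (sE ⁻¹' (U i)) (sF ⁻¹' (τ '' U i)) ∧
        ∀ x ∈ sE ⁻¹' (U i), sF (γ i x) = τ (sE x) ∧ rF (γ i x) = τ (rE x)) ∧
      -- (C3): no three distinct members of the cover intersect
      (∀ i j p : Fin n, i ≠ j → j ≠ p → i ≠ p → U i ∩ U j ∩ U p = ∅) ∧
      -- (C4): `closure (U i) \ U j` and `closure (U j) \ U i` are disjoint
      (∀ i j : Fin n, i ≠ j → Disjoint (closure (U i) \ U j) (closure (U j) \ U i)) ∧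
      -- (C5): sheets over intersecting members match up via a permutation
      (∀ i j : Fin n, (U i ∩ U j).Nonempty →
        ∃ π : Fin (m i) ≃ Fin (m j), ∀ k l, (Ue i k ∩ Ue j l).Nonempty ↔ l = π k) ∧
      -- (C6): the corresponding cover `V i = τ '' U i`, `V_{ik} = γ i '' Ue i k` of `F`
      -- also satisfies (C5)
      (∀ i j : Fin n, ((τ '' U i) ∩ (τ '' U j)).Nonempty →
        ∃ π : Fin (m i) ≃ Fin (m j),
          ∀ k l, ((γ i '' Ue i k) ∩ (γ j '' Ue j l)).Nonempty ↔ l = π k) := by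
  classical
  have hsEc : Continuous sE := hsE.continuous
  have hsFc : Continuous sF := hsF.continuous
  -- local conjugacy data at every point
  have hex : ∀ u : E0, ∃ (m : ℕ) (L : AdmCover.LocData sE sF rE rF τ m), u ∈ L.DE.V :=
    fun u => AdmCover.exists_locData hsE hsFc hconj u
  choose mL LD hLD using hex
  -- finite subcover of the evenly covered conjugacy neighbourhoods
  obtain ⟨t0, ht0⟩ := isCompact_univ.elim_finite_subcover (fun u => (LD u).DE.V)
    (fun u => (LD u).DE.hV) (fun x _ => mem_iUnion.2 ⟨x, hLD x⟩)
  set ι := {u : E0 // u ∈ t0} with hιdef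
  set Vt : ι → Set E0 := fun t => (LD t.1).DE.V with hVtdef
  have hVto : ∀ t, IsOpen (Vt t) := fun t => (LD t.1).DE.hV
  have hVtcov : (⋃ t, Vt t) = univ := by
    apply eq_univ_of_univ_subset
    intro x hx
    obtain ⟨u, hu1, hu2⟩ := mem_iUnion₂.1 (ht0 hx)
    exact mem_iUnion.2 ⟨⟨u, hu1⟩, hu2⟩
  -- shrink it
  obtain ⟨C, hCcov, hCo, hCcl⟩ := exists_iUnion_eq_closure_subset hVto
    (fun x => Set.toFinite _) hVtcov
  -- choose transitions on both sides
  have hexσE : ∀ (a b : ι) (u : E0), u ∈ Vt a → u ∈ Vt b →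
      ∃ σ : Fin (mL a.1) → Fin (mL b.1),
        u ∈ AdmCover.Sheaf.Omega (LD a.1).DE (LD b.1).DE σ :=
    fun a b u ha hb => AdmCover.Sheaf.exists_mem_Omega _ _ ha hb
  choose σE hσE using hexσE
  have hexσF : ∀ (a b : ι) (u : E0), u ∈ Vt a → u ∈ Vt b →
      ∃ σ : Fin (mL a.1) → Fin (mL b.1),
        τ u ∈ AdmCover.Sheaf.Omega (LD a.1).DF (LD b.1).DF σ := by
    intro a b u ha hb
    refine AdmCover.Sheaf.exists_mem_Omega _ _ ?_ ?_
    · rw [(LD a.1).hVF]; exact mem_image_of_mem τ ha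
    · rw [(LD b.1).hVF]; exact mem_image_of_mem τ hb
  choose σF hσF using hexσF
  -- the homogeneous neighbourhoods
  set N : E0 → Set E0 := fun u =>
    ((⋂ (a : ι), ⋂ (_ : u ∈ Vt a), Vt a) ∩
     ((⋂ (a : ι), ⋂ (b : ι), ⋂ (ha : u ∈ Vt a), ⋂ (hb : u ∈ Vt b),
        AdmCover.Sheaf.Omega (LD a.1).DE (LD b.1).DE (σE a b u ha hb)) ∩
      (⋂ (a : ι), ⋂ (b : ι), ⋂ (ha : u ∈ Vt a), ⋂ (hb : u ∈ Vt b),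
        τ ⁻¹' (AdmCover.Sheaf.Omega (LD a.1).DF (LD b.1).DF (σF a b u ha hb))))) \
     (⋃ (a : ι), ⋃ (_ : u ∉ closure (C a)), closure (C a)) with hNdef
  have hNopen : ∀ u, IsOpen (N u) := by
    intro u
    refine IsOpen.sdiff (IsOpen.inter ?_ (IsOpen.inter ?_ ?_)) ?_
    · exact isOpen_iInter_of_finite fun a => isOpen_iInter_of_finite fun _ => hVto a
    · exact isOpen_iInter_of_finite fun a => isOpen_iInter_of_finite fun b =>
        isOpen_iInter_of_finite fun ha => isOpen_iInter_of_finite fun hb =>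
          AdmCover.Sheaf.Omega_open _ _ _
    · exact isOpen_iInter_of_finite fun a => isOpen_iInter_of_finite fun b =>
        isOpen_iInter_of_finite fun ha => isOpen_iInter_of_finite fun hb =>
          (AdmCover.Sheaf.Omega_open _ _ _).preimage τ.continuous
    · exact isClosed_iUnion_of_finite fun a => isClosed_iUnion_of_finite fun _ =>
        isClosed_closure
  have hNmem : ∀ u, u ∈ N u := by
    intro u
    refine ⟨⟨mem_iInter.2 fun a => mem_iInter.2 fun ha => ha,
      mem_iInter.2 fun a => mem_iInter.2 fun b => mem_iInter.2 fun ha =>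
        mem_iInter.2 fun hb => hσE a b u ha hb,
      mem_iInter.2 fun a => mem_iInter.2 fun b => mem_iInter.2 fun ha =>
        mem_iInter.2 fun hb => hσF a b u ha hb⟩, ?_⟩
    intro hu
    obtain ⟨a, ha⟩ := mem_iUnion.1 hu
    obtain ⟨hna, hcl⟩ := mem_iUnion.1 ha
    exact hna hcl
  have hNsubV : ∀ (u : E0) (a : ι), u ∈ Vt a → N u ⊆ Vt a := by
    intro u a ha x hx
    exact mem_iInter.1 (mem_iInter.1 hx.1.1 a) ha
  have hNOmE : ∀ (u : E0) (a b : ι) (ha : u ∈ Vt a) (hb : u ∈ Vt b),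
      N u ⊆ AdmCover.Sheaf.Omega (LD a.1).DE (LD b.1).DE (σE a b u ha hb) := by
    intro u a b ha hb x hx
    exact mem_iInter.1 (mem_iInter.1 (mem_iInter.1 (mem_iInter.1 hx.1.2.1 a) b) ha) hb
  have hNOmF : ∀ (u : E0) (a b : ι) (ha : u ∈ Vt a) (hb : u ∈ Vt b),
      N u ⊆ τ ⁻¹' (AdmCover.Sheaf.Omega (LD a.1).DF (LD b.1).DF (σF a b u ha hb)) := by
    intro u a b ha hb x hx
    exact mem_iInter.1 (mem_iInter.1 (mem_iInter.1 (mem_iInter.1 hx.1.2.2 a) b) ha) hb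
  have hNC : ∀ (u x : E0) (a : ι), x ∈ N u → x ∈ C a → u ∈ Vt a := by
    intro u x a hx hxc
    by_contra hc
    have hucl : u ∉ closure (C a) := fun h => hc (hCcl a h)
    exact hx.2 (mem_iUnion.2 ⟨a, mem_iUnion.2 ⟨hucl, subset_closure hxc⟩⟩)
  -- finite subcover of the homogeneous neighbourhoods
  obtain ⟨t1, ht1⟩ := isCompact_univ.elim_finite_subcover N hNopen
    (fun x _ => mem_iUnion.2 ⟨x, hNmem x⟩)
  set κ := {u : E0 // u ∈ t1} with hκdef
  set e1 := Fintype.equivFin κ with he1def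
  set W : Fin (Fintype.card κ) → Set E0 := fun i => N (e1.symm i).1 with hWdef
  have hWo : ∀ i, IsOpen (W i) := fun i => hNopen _
  have hWcov : (⋃ i, W i) = univ := by
    apply eq_univ_of_univ_subset
    intro x hx
    obtain ⟨u, hu1, hu2⟩ := mem_iUnion₂.1 (ht1 hx)
    exact mem_iUnion.2 ⟨e1 ⟨u, hu1⟩, by simpa [hWdef] using hu2⟩
  obtain ⟨M, B, hBo, hBcov, hBref, hBord⟩ := hdim (Fintype.card κ) W hWo hWcov
  -- base points, parents, and the nice cover
  have hbase : ∀ j : Fin M, ∃ u : E0, B j ⊆ N u := by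
    intro j
    obtain ⟨i, hi⟩ := hBref j
    exact ⟨(e1.symm i).1, hi⟩
  choose base hBN using hbase
  have hpar : ∀ j : Fin M, ∃ a : ι, base j ∈ Vt a := by
    intro j
    have : base j ∈ ⋃ t, Vt t := hVtcov.symm ▸ mem_univ _
    exact mem_iUnion.1 this
  choose par hparV using hpar
  obtain ⟨U, hUo, hUcov, hUB, hC3, hC4'⟩ := AdmCover.exists_nice_cover B hBo hBcov hBord
  have hUN : ∀ j, U j ⊆ N (base j) := fun j => (hUB j).trans (hBN j)
  have hUV : ∀ j, U j ⊆ Vt (par j) := fun j => (hUN j).trans (hNsubV _ _ (hparV j))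
  -- restricted local data over each member of the cover
  set Lr : (j : Fin M) → AdmCover.LocData sE sF rE rF τ (mL (par j).1) := fun j =>
    (LD (par j).1).restrict (U j) (hUo j) (hUV j) hsEc hsFc with hLrdef
  refine ⟨M, U, fun j => mL (par j).1,
    fun j k => (LD (par j).1).DE.R k ∩ sE ⁻¹' (U j),
    fun j => (LD (par j).1).γ, hUo, hUcov, ?_, ?_, hC3, ?_, ?_, ?_⟩
  · -- (C1)
    intro i
    refine ⟨fun k => (Lr i).DE.hRopen k, fun k l h => (Lr i).DE.hdisj k l h,
      (Lr i).DE.hcup, fun k => (Lr i).DE.mapsHomeoOn k⟩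
  · -- (C2)
    intro i
    refine ⟨⟨(Lr i).g.toPartialHomeomorph, (Lr i).hgsrc, (Lr i).hgtgt, (Lr i).hγg⟩, (Lr i).hint⟩
  · -- (C4)
    intro i j h
    rw [Set.disjoint_left]
    rintro x ⟨hxc, hxn⟩ ⟨hxc', hxn'⟩
    rcases hC4' i j h ⟨hxc, hxc'⟩ with h1 | h1
    · exact hxn' h1
    · exact hxn h1
  · -- (C5)
    intro i j hne
    obtain ⟨x, hx⟩ := hne
    have hxNi : x ∈ N (base i) := hUN i hx.1
    have hxNj : x ∈ N (base j) := hUN j hx.2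
    have hxC : x ∈ ⋃ a, C a := hCcov.symm ▸ mem_univ x
    obtain ⟨c, hxc⟩ := mem_iUnion.1 hxC
    have hbi : base i ∈ Vt c := hNC (base i) x c hxNi hxc
    have hbj : base j ∈ Vt c := hNC (base j) x c hxNj hxc
    have hσ : ∀ v ∈ U i ∩ U j, ∀ k, ((LD (par i).1).DE).pt k v ∈
        ((LD (par j).1).DE).R ((σE c (par j) (base j) hbj (hparV j))
          ((σE (par i) c (base i) (hparV i) hbi) k)) := by
      intro v hv k
      have hv1 := hNOmE (base i) (par i) c (hparV i) hbi (hUN i hv.1)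
      have hv2 := hNOmE (base j) c (par j) hbj (hparV j) (hUN j hv.2)
      exact AdmCover.Sheaf.Omega_trans hv1 hv2 k
    exact AdmCover.Sheaf.match_of_const _ _ (hUV i) (hUV j) ⟨x, hx⟩
      ((σE c (par j) (base j) hbj (hparV j)) ∘ (σE (par i) c (base i) (hparV i) hbi)) hσ
  · -- (C6)
    intro i j hne
    have hne' : (U i ∩ U j).Nonempty := by
      obtain ⟨y, hy1, hy2⟩ := hne
      obtain ⟨x1, hx1, rfl⟩ := hy1
      obtain ⟨x2, hx2, he⟩ := hy2
      exact ⟨x1, hx1, (τ.injective he) ▸ hx2⟩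
    obtain ⟨x, hx⟩ := hne'
    have hxNi : x ∈ N (base i) := hUN i hx.1
    have hxNj : x ∈ N (base j) := hUN j hx.2
    have hxC : x ∈ ⋃ a, C a := hCcov.symm ▸ mem_univ x
    obtain ⟨c, hxc⟩ := mem_iUnion.1 hxC
    have hbi : base i ∈ Vt c := hNC (base i) x c hxNi hxc
    have hbj : base j ∈ Vt c := hNC (base j) x c hxNj hxc
    have hσ : ∀ w ∈ (τ '' U i) ∩ (τ '' U j), ∀ k, ((LD (par i).1).DF).pt k w ∈
        ((LD (par j).1).DF).R ((σF c (par j) (base j) hbj (hparV j))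
          ((σF (par i) c (base i) (hparV i) hbi) k)) := by
      rintro w ⟨hw1, hw2⟩ k
      obtain ⟨v, hv, rfl⟩ := hw1
      have hv2 : v ∈ U j := by
        obtain ⟨v', hv', he⟩ := hw2
        exact (τ.injective he) ▸ hv'
      have h1 := hNOmF (base i) (par i) c (hparV i) hbi (hUN i hv)
      have h2 := hNOmF (base j) c (par j) hbj (hparV j) (hUN j hv2)
      exact AdmCover.Sheaf.Omega_trans h1 h2 k
    have hAVF : τ '' U i ⊆ (LD (par i).1).DF.V := by
      rw [(LD (par i).1).hVF]; exact image_mono (hUV i)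
    have hBVF : τ '' U j ⊆ (LD (par j).1).DF.V := by
      rw [(LD (par j).1).hVF]; exact image_mono (hUV j)
    obtain ⟨π, hπ⟩ := AdmCover.Sheaf.match_of_const (LD (par i).1).DF (LD (par j).1).DF
      hAVF hBVF hne
      ((σF c (par j) (base j) hbj (hparV j)) ∘ (σF (par i) c (base i) (hparV i) hbi)) hσ
    have him : ∀ (r : Fin M) (k : Fin (mL (par r).1)),
        (LD (par r).1).γ '' ((LD (par r).1).DE.R k ∩ sE ⁻¹' U r)
          = (LD (par r).1).DF.R k ∩ sF ⁻¹' (τ '' U r) := by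
      intro r k
      have h1 := (Lr r).hRF k
      have h2 : Set.EqOn (LD (par r).1).γ ((Lr r).g)
          ((LD (par r).1).DE.R k ∩ sE ⁻¹' U r) := fun z hz => (Lr r).hγg hz.2
      calc (LD (par r).1).γ '' ((LD (par r).1).DE.R k ∩ sE ⁻¹' U r)
          = (Lr r).g '' ((LD (par r).1).DE.R k ∩ sE ⁻¹' U r) := h2.image_eq
        _ = (Lr r).DF.R k := h1.symm
        _ = (LD (par r).1).DF.R k ∩ sF ⁻¹' (τ '' U r) := rfl
    refine ⟨π, fun k l => ?_⟩
    rw [him i k, him j l]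
    exact hπ k l
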